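/- Let X = (X_1, X_2, …) be a random element of the real Hilbert space ℓ² with ∑_{k=1}^∞ E(X_k²) < ∞ and law μ. Let Y = (Y_1, Y_2, …) be the residual sequence of X, with τ_k² = E(Y_k²) > 0 for all k ≥ 1. Assume Y is α-mixing with mixing coefficients {α_k} satisfying ∑_{k=1}^∞ α_k^{1−1/(2p)} < ∞ for some p ≥ 1, and sup_{k≥1} E[(Y_k/τ_k)^{2r}] < ∞ for some r > p. Then PD(x) = 0 for μ-almost every x ∈ ℓ². -/

import Mathlib

open MeasureTheory ProbabilityTheory ENNReal

/-- The projection depth of `x` with respect to the probability measure `μ` on `ℓ²`: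
`PD(x) = [1 + sup_u |⟨u,x⟩ − E⟨u,X⟩| / sd(⟨u,X⟩)]⁻¹`, the supremum being over all `u`
for which the variance of `⟨u,X⟩` is strictly positive (computed in `ℝ≥0∞`, so that an
unbounded supremum gives depth `0`). -/
noncomputable def projDepth [MeasurableSpace (lp (fun _ : ℕ => ℝ) 2)]
    (μ : Measure (lp (fun _ : ℕ => ℝ) 2)) (x : lp (fun _ : ℕ => ℝ) 2) : ℝ≥0∞ :=
  (1 + ⨆ (u : lp (fun _ : ℕ => ℝ) 2)
      (_ : 0 < ∫ z, ((inner (𝕜 := ℝ) u z : ℝ) - ∫ w, (inner (𝕜 := ℝ) u w : ℝ) ∂μ) ^ 2 ∂μ),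
    ENNReal.ofReal (|(inner (𝕜 := ℝ) u x : ℝ) - ∫ w, (inner (𝕜 := ℝ) u w : ℝ) ∂μ| /
      Real.sqrt (∫ z, ((inner (𝕜 := ℝ) u z : ℝ) - ∫ w, (inner (𝕜 := ℝ) u w : ℝ) ∂μ) ^ 2 ∂μ)))⁻¹

namespace ProjDepthAux

noncomputable abbrev E2 := lp (fun _ : ℕ => ℝ) 2

lemma coord_eq_inner (k : ℕ) (z : E2) :
    (inner (𝕜 := ℝ) (lp.single 2 k (1:ℝ)) z : ℝ) = z k := by
  rw [lp.inner_single_left]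
  simp [RCLike.inner_apply]

lemma coord_continuous (k : ℕ) : Continuous (fun z : E2 => z k) := by
  have : (fun z : E2 => z k) = fun z => (inner (𝕜 := ℝ) (lp.single 2 k (1:ℝ)) z : ℝ) := by
    funext z; rw [coord_eq_inner]
  rw [this]
  exact (innerSL ℝ (E := E2) (lp.single 2 k (1:ℝ))).continuous

lemma inner_comb (n : ℕ) (c : ℕ → ℝ) (β : ℕ → ℕ → ℝ) (z : E2) :
    (inner (𝕜 := ℝ) (∑ k ∈ Finset.range n, c k •
        (lp.single 2 k (1:ℝ) - ∑ j ∈ Finset.range k, β k j • lp.single 2 j (1:ℝ))) z : ℝ)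
      = ∑ k ∈ Finset.range n, c k * (z k - ∑ j ∈ Finset.range k, β k j * z j) := by
  rw [sum_inner]
  refine Finset.sum_congr rfl fun k _ => ?_
  rw [real_inner_smul_left, inner_sub_left, sum_inner, coord_eq_inner]
  congr 2
  refine Finset.sum_congr rfl fun j _ => ?_
  rw [real_inner_smul_left, coord_eq_inner]

end ProjDepthAux

open ProjDepthAux

set_option maxHeartbeats 2000000 in
/-- Theorem 2.1 (projection depth part): if the residual sequence `Y` of a random element `X`
of `ℓ²` (with summable coordinate second moments) is `α`-mixing with
`∑ α_k ^ (1 − 1/(2p)) < ∞` for some `p ≥ 1`, all residual variances `τ_k²` are positive, and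
`sup_k E[(Y_k/τ_k)^(2r)] < ∞` for some `r > p`, then `PD(x) = 0` for `μ`-a.e. `x`. -/
theorem projDepth_ae_eq_zero
    [MeasurableSpace (lp (fun _ : ℕ => ℝ) 2)] [BorelSpace (lp (fun _ : ℕ => ℝ) 2)]
    (μ : Measure (lp (fun _ : ℕ => ℝ) 2)) [IsProbabilityMeasure μ]
    -- the coordinates of `X` have finite, summable second moments
    (hX2 : ∀ k : ℕ, Integrable (fun z : lp (fun _ : ℕ => ℝ) 2 => (z k) ^ 2) μ)
    (hXsum : Summable fun k : ℕ => ∫ z : lp (fun _ : ℕ => ℝ) 2, (z k) ^ 2 ∂μ)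
    -- `Y` is the residual sequence of `X`: `Y_k = X_k - (best affine predictor from X_0,…,X_{k-1})`,
    -- characterized by `Y_k` having zero mean and being orthogonal to `X_j`, `j < k`
    (Y : ℕ → lp (fun _ : ℕ => ℝ) 2 → ℝ) (b : ℕ → ℝ) (β : ℕ → ℕ → ℝ)
    (hYdef : ∀ k z, Y k z = z k - b k - ∑ j ∈ Finset.range k, β k j * z j)
    (hYmean : ∀ k, ∫ z, Y k z ∂μ = 0)
    (hYorth : ∀ k j, j < k → ∫ z, Y k z * z j ∂μ = 0)
    -- the residual variances `τ_k² = E(Y_k²)` are positive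
    (τ : ℕ → ℝ) (hτpos : ∀ k, 0 < τ k)
    (hτ : ∀ k, ∫ z, (Y k z) ^ 2 ∂μ = τ k ^ 2)
    -- `Y` is α-mixing with mixing coefficients `a`
    (a : ℕ → ℝ) (ha0 : ∀ k, 0 ≤ a k)
    (hmix : ∀ n k : ℕ, ∀ A B : Set (lp (fun _ : ℕ => ℝ) 2),
      MeasurableSet[⨆ i ∈ Finset.Iic n, MeasurableSpace.comap (Y i) (borel ℝ)] A →
      MeasurableSet[⨆ (i : ℕ) (_ : n + k ≤ i), MeasurableSpace.comap (Y i) (borel ℝ)] B →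
      |(μ (A ∩ B)).toReal - (μ A).toReal * (μ B).toReal| ≤ a k)
    (hmix0 : Filter.Tendsto a Filter.atTop (nhds 0))
    -- `∑ a_k^(1-1/2p) < ∞` for some `p ≥ 1`, and `sup_k E[(Y_k/τ_k)^(2r)] < ∞` for some `r > p`
    (p r : ℝ) (hp : 1 ≤ p) (hpr : p < r)
    (hasum : Summable fun k => a k ^ (1 - 1 / (2 * p)))
    (hmomInt : ∀ k, Integrable (fun z => |Y k z / τ k| ^ (2 * r)) μ)
    (hmom : ∃ C : ℝ, ∀ k, ∫ z, |Y k z / τ k| ^ (2 * r) ∂μ ≤ C) :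
    ∀ᵐ x ∂μ, projDepth μ x = 0 := by
  classical
  have hr1 : 1 < r := lt_of_le_of_lt hp hpr
  -- continuity and measurability of the residuals
  have contY : ∀ k, Continuous (Y k) := by
    intro k
    have : Y k = fun z : E2 => z k - b k - ∑ j ∈ Finset.range k, β k j * z j := by
      funext z; exact hYdef k z
    rw [this]
    exact ((coord_continuous k).sub continuous_const).sub
      (continuous_finset_sum _ fun j _ => continuous_const.mul (coord_continuous j))
  have measY : ∀ k, Measurable (Y k) := fun k => (contY k).measurable
  -- basic integrability
  have mem2X : ∀ k, MemLp (fun z : E2 => z k) 2 μ := fun k =>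
    (memLp_two_iff_integrable_sq (coord_continuous k).aestronglyMeasurable).2 (hX2 k)
  have mem2Y : ∀ k, MemLp (Y k) 2 μ := by
    intro k
    have : Y k = fun z : E2 => z k - b k - ∑ j ∈ Finset.range k, β k j * z j := by
      funext z; exact hYdef k z
    rw [this]
    refine MemLp.sub (MemLp.sub (mem2X k) (memLp_const (b k))) ?_
    exact memLp_finset_sum _ fun j _ => (mem2X j).const_mul (β k j)
  have int_mul : ∀ (f g : E2 → ℝ), MemLp f 2 μ → MemLp g 2 μ →
      Integrable (fun z => f z * g z) μ := by
    intro f g hf hg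
    have hf2 : Integrable (fun z => f z ^ 2) μ :=
      (memLp_two_iff_integrable_sq hf.1).1 hf
    have hg2 : Integrable (fun z => g z ^ 2) μ :=
      (memLp_two_iff_integrable_sq hg.1).1 hg
    refine ((hf2.add hg2).div_const 2).mono' (hf.1.mul hg.1) ?_
    refine Filter.Eventually.of_forall fun z => ?_
    have : ‖f z * g z‖ = |f z| * |g z| := by rw [Real.norm_eq_abs, abs_mul]
    rw [this]
    simp only [Pi.add_apply]
    nlinarith [sq_nonneg (|f z| - |g z|), sq_abs (f z), sq_abs (g z)]
  have intY : ∀ k, Integrable (Y k) μ := fun k =>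
    (mem2Y k).integrable (by norm_num)
  have int2Y : ∀ k, Integrable (fun z => Y k z ^ 2) μ := fun k =>
    (memLp_two_iff_integrable_sq (measY k).aestronglyMeasurable).1 (mem2Y k)
  have intYY : ∀ k l, Integrable (fun z => Y k z * Y l z) μ := fun k l =>
    int_mul _ _ (mem2Y k) (mem2Y l)
  have intYX : ∀ k j, Integrable (fun z => Y k z * z j) μ := fun k j =>
    int_mul _ _ (mem2Y k) (mem2X j)
  -- uncorrelatedness of the residuals
  have uncorr0 : ∀ k l, l < k → ∫ z, Y k z * Y l z ∂μ = 0 := by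
    intro k l hlk
    have expand : ∀ z : E2, Y k z * Y l z
        = Y k z * z l - b l * Y k z - ∑ j ∈ Finset.range l, β l j * (Y k z * z j) := by
      intro z
      have hs : ∑ j ∈ Finset.range l, β l j * (Y k z * z j)
          = Y k z * ∑ j ∈ Finset.range l, β l j * z j := by
        rw [Finset.mul_sum]; exact Finset.sum_congr rfl fun j _ => by ring
      rw [hYdef l z, hs]; ring
    have hint1 : Integrable (fun z => Y k z * z l) μ := intYX k l
    have hint2 : Integrable (fun z => b l * Y k z) μ := (intY k).const_mul (b l)
    have hint3 : Integrable (fun z : E2 => ∑ j ∈ Finset.range l, β l j * (Y k z * z j)) μ :=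
      integrable_finset_sum _ fun j _ => (intYX k j).const_mul (β l j)
    calc ∫ z, Y k z * Y l z ∂μ
        = ∫ z, (Y k z * z l - b l * Y k z
            - ∑ j ∈ Finset.range l, β l j * (Y k z * z j)) ∂μ := by
          exact integral_congr_ae (Filter.Eventually.of_forall expand)
      _ = 0 := by
          have hint12 : Integrable (fun z : E2 => Y k z * z l - b l * Y k z) μ :=
            hint1.sub hint2
          rw [integral_sub hint12 hint3, integral_sub hint1 hint2,
            integral_finset_sum _ (fun j _ => (intYX k j).const_mul (β l j))]
          rw [hYorth k l hlk, integral_const_mul, hYmean k]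
          simp only [mul_zero, sub_zero, zero_sub, neg_eq_zero, sub_self]
          refine Finset.sum_eq_zero fun j hj => ?_
          rw [integral_const_mul, hYorth k j (lt_trans (Finset.mem_range.1 hj) hlk), mul_zero]
  have uncorr : ∀ k l, k ≠ l → ∫ z, Y k z * Y l z ∂μ = 0 := by
    intro k l hkl
    rcases lt_or_gt_of_ne hkl with h | h
    · have : (fun z => Y k z * Y l z) = fun z => Y l z * Y k z := by
        funext z; ring
      rw [this]; exact uncorr0 l k h
    · exact uncorr0 k l h
  -- key construction: for any coefficients, a direction u realizing ∑ c k * Y k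
  have key : ∀ (n : ℕ) (c : ℕ → ℝ), ∃ u : E2,
      (∀ z : E2, (inner (𝕜 := ℝ) u z : ℝ) - (∫ w, (inner (𝕜 := ℝ) u w : ℝ) ∂μ)
          = ∑ k ∈ Finset.range n, c k * Y k z) ∧
      (∫ z, ((inner (𝕜 := ℝ) u z : ℝ) - ∫ w, (inner (𝕜 := ℝ) u w : ℝ) ∂μ) ^ 2 ∂μ
          = ∑ k ∈ Finset.range n, c k ^ 2 * τ k ^ 2) := by
    intro n c
    set u : E2 := ∑ k ∈ Finset.range n, c k •
        (lp.single 2 k (1:ℝ) - ∑ j ∈ Finset.range k, β k j • lp.single 2 j (1:ℝ)) with hu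
    have hinner : ∀ z : E2, (inner (𝕜 := ℝ) u z : ℝ)
        = ∑ k ∈ Finset.range n, c k * (Y k z + b k) := by
      intro z
      rw [hu, inner_comb]
      refine Finset.sum_congr rfl fun k _ => ?_
      rw [hYdef k z]; ring
    have hm : (∫ w, (inner (𝕜 := ℝ) u w : ℝ) ∂μ) = ∑ k ∈ Finset.range n, c k * b k := by
      have hintk : ∀ k, Integrable (fun z : E2 => c k * (Y k z + b k)) μ := fun k =>
        ((intY k).add (integrable_const (b k))).const_mul (c k)
      rw [integral_congr_ae (Filter.Eventually.of_forall hinner),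
        integral_finset_sum _ (fun k _ => hintk k)]
      refine Finset.sum_congr rfl fun k _ => ?_
      rw [integral_const_mul, integral_add (intY k) (integrable_const _), hYmean k, integral_const]
      simp
    have hdiff : ∀ z : E2, (inner (𝕜 := ℝ) u z : ℝ) - (∫ w, (inner (𝕜 := ℝ) u w : ℝ) ∂μ)
        = ∑ k ∈ Finset.range n, c k * Y k z := by
      intro z
      rw [hinner z, hm, ← Finset.sum_sub_distrib]
      exact Finset.sum_congr rfl fun k _ => by ring
    refine ⟨u, hdiff, ?_⟩
    have hsq : ∀ z : E2, ((inner (𝕜 := ℝ) u z : ℝ) - ∫ w, (inner (𝕜 := ℝ) u w : ℝ) ∂μ) ^ 2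
        = ∑ k ∈ Finset.range n, ∑ l ∈ Finset.range n, (c k * c l) * (Y k z * Y l z) := by
      intro z
      rw [hdiff z, sq, Finset.sum_mul_sum]
      exact Finset.sum_congr rfl fun k _ => Finset.sum_congr rfl fun l _ => by ring
    have hintkl : ∀ k l, Integrable (fun z : E2 => (c k * c l) * (Y k z * Y l z)) μ :=
      fun k l => (intYY k l).const_mul (c k * c l)
    have hintrow : ∀ k, Integrable
        (fun z : E2 => ∑ l ∈ Finset.range n, (c k * c l) * (Y k z * Y l z)) μ :=
      fun k => integrable_finset_sum _ (fun l _ => hintkl k l)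
    rw [integral_congr_ae (Filter.Eventually.of_forall hsq),
      integral_finset_sum _ (fun k _ => hintrow k)]
    refine Finset.sum_congr rfl fun k hk => ?_
    rw [integral_finset_sum _ (fun l _ => hintkl k l)]
    rw [Finset.sum_eq_single k]
    · rw [integral_const_mul]
      have : ∫ z, Y k z * Y k z ∂μ = τ k ^ 2 := by
        rw [← hτ k]
        exact integral_congr_ae (Filter.Eventually.of_forall fun z => by ring)
      rw [this]; ring
    · intro l _ hlk
      rw [integral_const_mul, uncorr k l (Ne.symm hlk), mul_zero]
    · intro hkk; exact absurd hk hkk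
  -- the events and their uniform probability lower bound
  set A : ℕ → Set E2 := fun k => {z | 1/2 ≤ |Y k z / τ k|} with hA_def
  have hA_meas : ∀ k, MeasurableSet (A k) := by
    intro k
    have : Continuous fun z : E2 => |Y k z / τ k| := ((contY k).div_const _).abs
    exact (isClosed_le continuous_const this).measurableSet
  obtain ⟨c0, hc0pos, hc0le, hc0 : ∀ k, c0 ≤ (μ (A k)).toReal⟩ :
      ∃ c0 : ℝ, 0 < c0 ∧ c0 ≤ 1 ∧ ∀ k, c0 ≤ (μ (A k)).toReal := by
    obtain ⟨C, hC⟩ := hmom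
    set C' : ℝ := max C 1 with hC'def
    have hC'1 : (1:ℝ) ≤ C' := le_max_right _ _
    have hC' : ∀ k, ∫ z, |Y k z / τ k| ^ (2 * r) ∂μ ≤ C' := fun k =>
      le_trans (hC k) (le_max_left _ _)
    set r' : ℝ := r / (r - 1) with hr'def
    have hpq : r.HolderConjugate r' := Real.HolderConjugate.conjExponent hr1
    set K : ℝ := C' ^ (1/r) with hKdef
    have hK1 : (1:ℝ) ≤ K := by
      have := Real.rpow_le_rpow (by norm_num : (0:ℝ) ≤ 1) hC'1 (by positivity : (0:ℝ) ≤ 1/r)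
      rwa [Real.one_rpow] at this
    have hKpos : (0:ℝ) < K := lt_of_lt_of_le one_pos hK1
    refine ⟨min ((3 / (4 * K)) ^ r') 1, lt_min (Real.rpow_pos_of_pos (by positivity) _) one_pos,
      min_le_right _ _, fun k => le_trans (min_le_left _ _) ?_⟩
    set W : E2 → ℝ := fun z => |Y k z / τ k| with hWdef
    have hWnn : ∀ z, 0 ≤ W z := fun z => abs_nonneg _
    have measW : Measurable W := ((measY k).div_const _).abs
    have hW2eq : (fun z => W z ^ 2) = fun z => Y k z ^ 2 * (τ k ^ 2)⁻¹ := by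
      funext z
      rw [hWdef, sq_abs, div_pow, div_eq_mul_inv]
    have hW2int : Integrable (fun z => W z ^ 2) μ := by
      rw [hW2eq]; exact (int2Y k).mul_const _
    have hW2 : ∫ z, W z ^ 2 ∂μ = 1 := by
      rw [hW2eq]
      rw [integral_mul_const, hτ k]
      exact mul_inv_cancel₀ (pow_ne_zero 2 (hτpos k).ne')
    -- split the second moment over `A k` and its complement
    have hsplit : 3/4 ≤ ∫ z in A k, W z ^ 2 ∂μ := by
      have h1 : (∫ z in A k, W z ^ 2 ∂μ) + ∫ z in (A k)ᶜ, W z ^ 2 ∂μ = 1 := by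
        rw [integral_add_compl (hA_meas k) hW2int, hW2]
      have h2 : ∫ z in (A k)ᶜ, W z ^ 2 ∂μ ≤ 1/4 := by
        have hb : ∀ z ∈ (A k)ᶜ, W z ^ 2 ≤ 1/4 := by
          intro z hz
          have : W z ≤ 1/2 := le_of_not_ge hz
          nlinarith [hWnn z]
        calc ∫ z in (A k)ᶜ, W z ^ 2 ∂μ ≤ ∫ _ in (A k)ᶜ, (1/4 : ℝ) ∂μ := by
              refine setIntegral_mono_on hW2int.integrableOn (integrableOn_const ?_)
                (hA_meas k).compl hb
              exact measure_ne_top μ _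
          _ ≤ 1/4 := by
              rw [setIntegral_const, smul_eq_mul, measureReal_def]
              have hμ1 : (μ (A k)ᶜ).toReal ≤ 1 := by
                simpa using ENNReal.toReal_mono one_ne_top (prob_le_one (μ := μ) (s := (A k)ᶜ))
              nlinarith [ENNReal.toReal_nonneg (a := μ (A k)ᶜ)]
      linarith
    -- Hölder's inequality
    have memW2r : MemLp W (ENNReal.ofReal (2*r)) μ := by
      have h2r0 : (0:ℝ) < 2 * r := by linarith
      have hne : ENNReal.ofReal (2*r) ≠ 0 := by
        simp [ENNReal.ofReal_eq_zero, not_le, h2r0]; linarith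
      have hWint : Integrable (fun z => ‖W z‖ ^ ((ENNReal.ofReal (2*r)).toReal)) μ := by
        have heq : (fun z => ‖W z‖ ^ ((ENNReal.ofReal (2*r)).toReal))
            = fun z => |Y k z / τ k| ^ (2*r) := by
          funext z
          rw [ENNReal.toReal_ofReal h2r0.le, Real.norm_eq_abs, hWdef, abs_abs]
        rw [heq]; exact hmomInt k
      have hmem1 : MemLp (fun z => ‖W z‖ ^ ((ENNReal.ofReal (2*r)).toReal))
          (ENNReal.ofReal (2*r) / ENNReal.ofReal (2*r)) μ := by
        rw [ENNReal.div_self hne ENNReal.ofReal_ne_top]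
        exact memLp_one_iff_integrable.2 hWint
      exact (memLp_norm_rpow_iff measW.aestronglyMeasurable hne ENNReal.ofReal_ne_top).1 hmem1
    have memW2 : MemLp (fun z => W z ^ 2) (ENNReal.ofReal r) μ := by
      have h := (memLp_norm_rpow_iff (q := 2) (p := ENNReal.ofReal (2*r))
        measW.aestronglyMeasurable two_ne_zero ENNReal.ofNat_ne_top).2 memW2r
      have heq : (fun z => ‖W z‖ ^ ((2:ℝ≥0∞).toReal)) = fun z => W z ^ 2 := by
        funext z
        rw [show ((2:ℝ≥0∞)).toReal = ((2:ℕ):ℝ) by simp, Real.rpow_natCast,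
          Real.norm_eq_abs, hWdef, abs_abs]
      have hexp : ENNReal.ofReal (2*r) / 2 = ENNReal.ofReal r := by
        rw [ENNReal.ofReal_mul (by norm_num : (0:ℝ) ≤ 2)]
        rw [show ENNReal.ofReal (2:ℝ) = 2 by norm_num]
        rw [mul_comm, mul_div_assoc, ENNReal.div_self two_ne_zero ENNReal.ofNat_ne_top,
          mul_one]
      rw [heq, hexp] at h
      exact h
    have memInd : MemLp ((A k).indicator (fun _ => (1:ℝ))) (ENNReal.ofReal r') μ :=
      memLp_indicator_const _ (hA_meas k) _ (Or.inr (measure_ne_top μ _))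
    have hold := integral_mul_le_Lp_mul_Lq_of_nonneg hpq
      (Filter.Eventually.of_forall fun z => sq_nonneg (W z))
      (Filter.Eventually.of_forall fun z => Set.indicator_nonneg (fun _ _ => zero_le_one) z)
      memW2 memInd
    -- rewrite the three integrals in Hölder's inequality
    have hLHS : ∫ z, W z ^ 2 * (A k).indicator (fun _ => (1:ℝ)) z ∂μ
        = ∫ z in A k, W z ^ 2 ∂μ := by
      rw [← integral_indicator (hA_meas k)]
      congr 1
      funext z
      by_cases hz : z ∈ A k <;> simp [Set.indicator_of_mem, Set.indicator_of_notMem, hz]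
    have hR1 : (∫ z, (W z ^ 2) ^ r ∂μ) ^ (1/r) ≤ K := by
      rw [hKdef]
      refine Real.rpow_le_rpow (integral_nonneg fun z => by positivity) ?_ (by positivity)
      have heq : (fun z => (W z ^ 2) ^ r) = fun z => |Y k z / τ k| ^ (2*r) := by
        funext z
        rw [← Real.rpow_natCast (W z) 2, ← Real.rpow_mul (hWnn z)]
        rw [hWdef]
        norm_num
      rw [heq]; exact hC' k
    have hR2 : ∫ z, ((A k).indicator (fun _ => (1:ℝ)) z) ^ r' ∂μ = (μ (A k)).toReal := by
      have heq : (fun z => ((A k).indicator (fun _ => (1:ℝ)) z) ^ r')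
          = (A k).indicator (fun _ => (1:ℝ)) := by
        funext z
        by_cases hz : z ∈ A k
        · simp [Set.indicator_of_mem, hz, Real.one_rpow]
        · simp [Set.indicator_of_notMem, hz, Real.zero_rpow hpq.symm.ne_zero]
      rw [heq, integral_indicator_const _ (hA_meas k), smul_eq_mul, mul_one, measureReal_def]
    rw [hLHS, hR2] at hold
    -- put everything together
    set t : ℝ := (μ (A k)).toReal with htdef
    have htnn : 0 ≤ t := ENNReal.toReal_nonneg
    have h5 : 3/4 ≤ K * t ^ (1/r') := by
      calc (3:ℝ)/4 ≤ ∫ z in A k, W z ^ 2 ∂μ := hsplit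
        _ ≤ (∫ z, (W z ^ 2) ^ r ∂μ) ^ (1/r) * t ^ (1/r') := hold
        _ ≤ K * t ^ (1/r') := by
            refine mul_le_mul_of_nonneg_right hR1 ?_
            positivity
    have h6 : 3/(4*K) ≤ t ^ (1/r') := by
      rw [div_le_iff₀ (by positivity)]
      calc (3:ℝ) = (3/4) * 4 := by norm_num
        _ ≤ (K * t ^ (1/r')) * 4 := by linarith
        _ = t ^ (1/r') * (4*K) := by ring
    calc (3/(4*K)) ^ r' ≤ (t ^ (1/r')) ^ r' :=
          Real.rpow_le_rpow (by positivity) h6 hpq.symm.nonneg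
      _ = t := by
          rw [← Real.rpow_mul htnn, one_div, inv_mul_cancel₀ hpq.symm.ne_zero, Real.rpow_one]
  -- Borel–Cantelli for mixing sequences: a.s. infinitely many events A k occur
  -- convenient facts about c0
  have h1c' : (0:ℝ) ≤ 1 - c0 := by linarith
  have measSet_mono : ∀ {m m' : MeasurableSpace E2}, m ≤ m' → ∀ {s : Set E2},
      MeasurableSet[m] s → MeasurableSet[m'] s := fun h _ hs => h _ hs
  have BC : ∀ᵐ z ∂μ, ∀ K : ℕ, ∃ k, K ≤ k ∧ z ∈ A k := by
    have hA_comap : ∀ k, MeasurableSet[MeasurableSpace.comap (Y k) (borel ℝ)] (A k) := by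
      intro k
      refine ⟨{t : ℝ | 1/2 ≤ |t / τ k|}, ?_, rfl⟩
      have h1 : MeasurableSet {t : ℝ | 1/2 ≤ |t / τ k|} :=
        (isClosed_le continuous_const ((continuous_id.div_const _).abs)).measurableSet
      rwa [BorelSpace.measurable_eq (α := ℝ)] at h1
    have hone : (1 : ℝ≥0∞) ≠ ⊤ := one_ne_top
    have hAc_toReal : ∀ m : ℕ, (μ (A m)ᶜ).toReal = 1 - (μ (A m)).toReal := by
      intro m
      rw [measure_compl (hA_meas m) (measure_ne_top μ _), measure_univ,
        ENNReal.toReal_sub_of_le prob_le_one hone, ENNReal.toReal_one]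
    have hrec : ∀ (K g : ℕ), 1 ≤ g → ∀ J : ℕ,
        (μ (⋂ i ∈ Finset.range (J+1), (A (K + g*i))ᶜ)).toReal ≤ (1-c0)^J + a g / c0 := by
      intro K g hg J
      induction J with
      | zero =>
        have h1 : (μ (⋂ i ∈ Finset.range 1, (A (K + g*i))ᶜ)).toReal ≤ 1 := by
          simpa using ENNReal.toReal_mono hone (prob_le_one (μ := μ))
        have h2 : 0 ≤ a g / c0 := div_nonneg (ha0 g) hc0pos.le
        rw [pow_zero]
        linarith
      | succ J ih =>
        set F := ⋂ i ∈ Finset.range (J+1), (A (K + g*i))ᶜ with hF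
        set B := (A (K + g*(J+1)))ᶜ with hB
        have hstep : ⋂ i ∈ Finset.range (J+1+1), (A (K + g*i))ᶜ = F ∩ B := by
          rw [Finset.range_add_one, Finset.set_biInter_insert]
          exact Set.inter_comm _ _
        have hFmeas : MeasurableSet[⨆ i ∈ Finset.Iic (K + g*J),
            MeasurableSpace.comap (Y i) (borel ℝ)] F := by
          refine Finset.measurableSet_biInter _ fun i hi => MeasurableSet.compl ?_
          have hle : MeasurableSpace.comap (Y (K + g*i)) (borel ℝ)
              ≤ ⨆ i ∈ Finset.Iic (K + g*J), MeasurableSpace.comap (Y i) (borel ℝ) := by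
            refine le_iSup₂ (f := fun (i : ℕ) (_ : i ∈ Finset.Iic (K + g*J)) =>
              MeasurableSpace.comap (Y i) (borel ℝ)) (K + g*i) ?_
            rw [Finset.mem_Iic]
            have : g * i ≤ g * J := Nat.mul_le_mul_left g (Nat.lt_succ_iff.1 (Finset.mem_range.1 hi))
            omega
          exact measSet_mono hle (hA_comap _)
        have hidx : K + g*(J+1) = (K + g*J) + g := by rw [Nat.mul_succ]; omega
        have hBmeas : MeasurableSet[⨆ (i : ℕ) (_ : (K + g*J) + g ≤ i),
            MeasurableSpace.comap (Y i) (borel ℝ)] B := by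
          refine MeasurableSet.compl ?_
          have hle : MeasurableSpace.comap (Y (K + g*(J+1))) (borel ℝ)
              ≤ ⨆ (i : ℕ) (_ : (K + g*J) + g ≤ i), MeasurableSpace.comap (Y i) (borel ℝ) :=
            le_iSup₂ (f := fun (i : ℕ) (_ : (K + g*J) + g ≤ i) =>
              MeasurableSpace.comap (Y i) (borel ℝ)) (K + g*(J+1)) (le_of_eq hidx.symm)
          exact measSet_mono hle (hA_comap _)
        have hmx := hmix (K + g*J) g F B hFmeas hBmeas
        have habs : (μ (F ∩ B)).toReal ≤ (μ F).toReal * (μ B).toReal + a g := by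
          have := (abs_le.1 hmx).2
          linarith
        have hqB : (μ B).toReal ≤ 1 - c0 := by
          rw [hB, hAc_toReal]
          linarith [hc0 (K + g*(J+1))]
        have hFnn : 0 ≤ (μ F).toReal := ENNReal.toReal_nonneg
        have h1c : 0 ≤ 1 - c0 := by linarith
        have hkey : a g / c0 * (1 - c0) + a g = a g / c0 := by
          field_simp
          ring
        calc (μ (⋂ i ∈ Finset.range (J+1+1), (A (K + g*i))ᶜ)).toReal
            = (μ (F ∩ B)).toReal := by rw [hstep]
          _ ≤ (μ F).toReal * (μ B).toReal + a g := habs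
          _ ≤ (μ F).toReal * (1 - c0) + a g := by
              have := mul_le_mul_of_nonneg_left hqB hFnn
              linarith
          _ ≤ ((1-c0)^J + a g / c0) * (1 - c0) + a g := by
              have := mul_le_mul_of_nonneg_right ih h1c
              linarith
          _ = (1-c0)^(J+1) + (a g / c0 * (1 - c0) + a g) := by ring
          _ = (1-c0)^(J+1) + a g / c0 := by rw [hkey]
    have hnull : ∀ K : ℕ, μ (⋂ (k) (_ : K ≤ k), (A k)ᶜ) = 0 := by
      intro K
      set S := ⋂ (k) (_ : K ≤ k), (A k)ᶜ with hS
      have hSsub : ∀ g J : ℕ, S ⊆ ⋂ i ∈ Finset.range (J+1), (A (K + g*i))ᶜ := by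
        intro g J z hz
        simp only [hS, Set.mem_iInter] at hz ⊢
        intro i _
        exact hz _ (Nat.le_add_right _ _)
      have hb : ∀ g : ℕ, 1 ≤ g → (μ S).toReal ≤ a g / c0 := by
        intro g hg
        have hlim : Filter.Tendsto (fun J : ℕ => (1-c0)^J + a g / c0)
            Filter.atTop (nhds (a g / c0)) := by
          have h0 := tendsto_pow_atTop_nhds_zero_of_lt_one h1c' (by linarith)
          simpa using h0.add (tendsto_const_nhds (x := a g / c0))
        refine ge_of_tendsto' hlim fun J => ?_
        exact le_trans (ENNReal.toReal_mono (measure_ne_top μ _)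
          (measure_mono (hSsub g J))) (hrec K g hg J)
      have hle0 : (μ S).toReal ≤ 0 := by
        have htend : Filter.Tendsto (fun g => a g / c0) Filter.atTop (nhds 0) := by
          simpa using hmix0.div_const c0
        refine ge_of_tendsto htend ?_
        filter_upwards [Filter.eventually_ge_atTop 1] with g hg using hb g hg
      have h0 : (μ S).toReal = 0 := le_antisymm hle0 ENNReal.toReal_nonneg
      rcases (ENNReal.toReal_eq_zero_iff _).1 h0 with h | h
      · exact h
      · exact absurd h (measure_ne_top μ _)
    have hU : μ (⋃ K : ℕ, ⋂ (k) (_ : K ≤ k), (A k)ᶜ) = 0 :=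
      measure_iUnion_null fun K => hnull K
    have := (MeasureTheory.measure_eq_zero_iff_ae_notMem (μ := μ)).1 hU
    filter_upwards [this] with z hz K
    simp only [Set.mem_iUnion, Set.mem_iInter, Set.mem_compl_iff, not_forall, not_not,
      not_exists] at hz
    obtain ⟨k, hk, hmem⟩ := hz K
    exact ⟨k, hk, hmem⟩
  -- conclusion
  filter_upwards [BC] with x hx
  rw [projDepth, ENNReal.inv_eq_zero]
  have hS : (⨆ (u : lp (fun _ : ℕ => ℝ) 2)
      (_ : 0 < ∫ z, ((inner (𝕜 := ℝ) u z : ℝ) - ∫ w, (inner (𝕜 := ℝ) u w : ℝ) ∂μ) ^ 2 ∂μ),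
      ENNReal.ofReal (|(inner (𝕜 := ℝ) u x : ℝ) - ∫ w, (inner (𝕜 := ℝ) u w : ℝ) ∂μ| /
        Real.sqrt (∫ z, ((inner (𝕜 := ℝ) u z : ℝ) - ∫ w, (inner (𝕜 := ℝ) u w : ℝ) ∂μ) ^ 2 ∂μ)))
      = ⊤ := by
    refine ENNReal.eq_top_of_forall_nnreal_le fun ρ => ?_
    set V : ℕ → ℝ := fun n => ∑ k ∈ Finset.range n, (Y k x / τ k) ^ 2 with hV
    have hVmono : ∀ m n : ℕ, m ≤ n → V m ≤ V n := by
      intro m n hmn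
      exact Finset.sum_le_sum_of_subset_of_nonneg (Finset.range_subset_range.2 hmn)
        (fun k _ _ => sq_nonneg _)
    have hVgrow : ∀ m : ℕ, ∃ n, (m : ℝ) * (1/4) ≤ V n := by
      intro m
      induction m with
      | zero => exact ⟨0, by simp [hV]⟩
      | succ m ih =>
        obtain ⟨n, hn⟩ := ih
        obtain ⟨k, hk, hmem⟩ := hx n
        refine ⟨k+1, ?_⟩
        have hterm : (1/4 : ℝ) ≤ (Y k x / τ k) ^ 2 := by
          have h1 : (1/2 : ℝ) ^ 2 ≤ |Y k x / τ k| ^ 2 :=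
            pow_le_pow_left₀ (by norm_num) hmem 2
          rw [sq_abs] at h1
          linarith
        have hsum : V (k+1) = V k + (Y k x / τ k) ^ 2 := Finset.sum_range_succ _ _
        have hVk : V n ≤ V k := hVmono n k hk
        push_cast
        linarith
    obtain ⟨n, hn⟩ := hVgrow (⌈((ρ:ℝ))^2 * 4⌉₊ + 1)
    have hmge : ((ρ:ℝ))^2 * 4 + 1 ≤ ((⌈((ρ:ℝ))^2 * 4⌉₊ + 1 : ℕ) : ℝ) := by
      have := Nat.le_ceil (((ρ:ℝ))^2 * 4)
      push_cast
      linarith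
    have hVn : ((ρ:ℝ))^2 + 1/4 ≤ V n := by
      have h4 : (((⌈((ρ:ℝ))^2 * 4⌉₊ + 1 : ℕ)) : ℝ) * (1/4) ≤ V n := hn
      nlinarith
    have hVpos : 0 < V n := lt_of_lt_of_le (by positivity) hVn
    obtain ⟨u, hdiff, hvar⟩ := key n (fun k => Y k x / τ k ^ 2)
    have hnum : (inner (𝕜 := ℝ) u x : ℝ) - (∫ w, (inner (𝕜 := ℝ) u w : ℝ) ∂μ) = V n := by
      rw [hdiff x, hV]
      refine Finset.sum_congr rfl fun k _ => ?_
      rw [div_pow]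
      ring
    have hvar' : (∫ z, ((inner (𝕜 := ℝ) u z : ℝ)
        - ∫ w, (inner (𝕜 := ℝ) u w : ℝ) ∂μ) ^ 2 ∂μ) = V n := by
      rw [hvar, hV]
      refine Finset.sum_congr rfl fun k _ => ?_
      have hτne : τ k ≠ 0 := (hτpos k).ne'
      field_simp
    refine le_trans ?_ (le_iSup₂ (f := fun (u : lp (fun _ : ℕ => ℝ) 2)
        (_ : 0 < ∫ z, ((inner (𝕜 := ℝ) u z : ℝ)
          - ∫ w, (inner (𝕜 := ℝ) u w : ℝ) ∂μ) ^ 2 ∂μ) =>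
        ENNReal.ofReal (|(inner (𝕜 := ℝ) u x : ℝ) - ∫ w, (inner (𝕜 := ℝ) u w : ℝ) ∂μ| /
          Real.sqrt (∫ z, ((inner (𝕜 := ℝ) u z : ℝ)
            - ∫ w, (inner (𝕜 := ℝ) u w : ℝ) ∂μ) ^ 2 ∂μ))) u (by rw [hvar']; exact hVpos))
    rw [hnum, hvar', abs_of_pos hVpos, Real.div_sqrt]
    have hρle : (ρ:ℝ) ≤ Real.sqrt (V n) := by
      rw [Real.le_sqrt ρ.coe_nonneg hVpos.le]
      linarith
    calc (ρ : ℝ≥0∞) = ENNReal.ofReal (ρ:ℝ) := (ENNReal.ofReal_coe_nnreal (p := ρ)).symm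
      _ ≤ ENNReal.ofReal (Real.sqrt (V n)) := ENNReal.ofReal_le_ofReal hρle
  rw [hS]
  simp
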